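/- arXiv:1503.05049 — 2 statements merged into one kernel-verified Lean document; each statement's English description precedes it below -/
import Mathlib

section
/- Let k ≥ 1 be an integer, F a field, and let f : ℤ × ℤ → F be a tame SL_{k+1}-tiling. Define the projective dual f* : ℤ × ℤ → F by letting f*(i,j) be the adjacent minor of order k of f based at (i,j) (for k = 1, the empty-minor convention gives f*(i,j) = f(i,j)). Then f* is again a tame SL_{k+1}-tiling: every adjacent minor of order k+1 of f* equals 1, and every adjacent minor of order k+2 of f* equals 0. -/
/-- The adjacent minor of order `r` of `f : ℤ → ℤ → F` based at `(i, j)`: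
the determinant of the `r × r` matrix `(f (i+s) (j+t))_{0 ≤ s,t ≤ r-1}`. -/
noncomputable def adjMinor {F : Type*} [Field F] (f : ℤ → ℤ → F) (r : ℕ) (i j : ℤ) : F :=
  Matrix.det (Matrix.of fun s t : Fin r => f (i + (s : ℕ)) (j + (t : ℕ)))

open Matrix Finset

namespace ProjDualAux


variable {F : Type*} [Field F]

/-- Corner cofactor: the `(last,last)` entry of the adjugate is the leading principal minor. -/
lemma adj_last {n : ℕ} (M : Matrix (Fin (n+1)) (Fin (n+1)) F) :
    M.adjugate (Fin.last n) (Fin.last n) = (M.submatrix Fin.castSucc Fin.castSucc).det := by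
  rw [Matrix.adjugate_apply, Matrix.det_succ_row _ (Fin.last n)]
  rw [Finset.sum_eq_single (Fin.last n)]
  · simp only [Matrix.updateRow_self, Pi.single_eq_same, Fin.succAbove_last]
    have h : ((M.updateRow (Fin.last n) (Pi.single (Fin.last n) 1)).submatrix
        Fin.castSucc Fin.castSucc) = M.submatrix Fin.castSucc Fin.castSucc := by
      ext s t
      simp [Matrix.updateRow_ne (Fin.castSucc_lt_last s).ne]
    rw [h]
    ring_nf
    rw [pow_mul, ← pow_mul, mul_comm (Fin.last n : ℕ) 2, pow_mul, neg_one_sq, one_pow, mul_one]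
  · intro b _ hb
    simp [Matrix.updateRow_self, Pi.single_eq_of_ne hb]
  · simp

/-- Corner cofactor: the `(0,0)` entry of the adjugate is the trailing principal minor. -/
lemma adj_zero {n : ℕ} (M : Matrix (Fin (n+1)) (Fin (n+1)) F) :
    M.adjugate 0 0 = (M.submatrix Fin.succ Fin.succ).det := by
  rw [Matrix.adjugate_apply, Matrix.det_succ_row _ 0]
  rw [Finset.sum_eq_single 0]
  · simp only [Matrix.updateRow_self, Pi.single_eq_same, Fin.succAbove_zero]
    have h : ((M.updateRow 0 (Pi.single 0 1)).submatrix Fin.succ Fin.succ)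
        = M.submatrix Fin.succ Fin.succ := by
      ext s t
      simp [Matrix.updateRow_ne (Fin.succ_ne_zero s)]
    rw [h]
    simp
  · intro b _ hb
    simp [Matrix.updateRow_self, Pi.single_eq_of_ne hb]
  · simp


/-- If an `(n+2)×(n+2)` matrix is singular, its leading principal `(n+1)`-minor is
nonzero, and a linear relation between the last row and the others holds in the first
`n+1` columns, then the relation also holds in the last column. -/
lemma row_ext {n : ℕ} (M : Matrix (Fin (n+2)) (Fin (n+2)) F) (hdet : M.det = 0)
    (hsub : (M.submatrix Fin.castSucc Fin.castSucc).det ≠ 0) (c : Fin (n+1) → F)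
    (hc : ∀ t : Fin (n+1), ∑ s, c s * M s.castSucc t.castSucc
      = M (Fin.last (n+1)) t.castSucc) :
    ∑ s, c s * M s.castSucc (Fin.last (n+1)) = M (Fin.last (n+1)) (Fin.last (n+1)) := by
  set x : F := M (Fin.last (n+1)) (Fin.last (n+1))
      - ∑ s, c s * M s.castSucc (Fin.last (n+1)) with hx
  set M' : Matrix (Fin (n+2)) (Fin (n+2)) F :=
      M.updateRow (Fin.last (n+1)) (Pi.single (Fin.last (n+1)) x) with hM'
  set c' : Fin (n+2) → F := Fin.lastCases 1 c with hc'
  have hM'row : ∀ s : Fin (n+1), M' s.castSucc = M s.castSucc := by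
    intro s; exact Matrix.updateRow_ne (Fin.castSucc_lt_last s).ne
  have key : M = M'.updateRow (Fin.last (n+1)) (∑ r, c' r • M' r) := by
    ext r t
    rcases eq_or_ne r (Fin.last (n+1)) with hr | hr
    · subst hr
      rw [Matrix.updateRow_self]
      have e1 : (∑ r, c' r • M' r) t = ∑ r, c' r * M' r t := by
        simp [Finset.sum_apply]
      rw [e1, Fin.sum_univ_castSucc]
      have e2 : ∀ s : Fin (n+1), c' s.castSucc * M' s.castSucc t = c s * M s.castSucc t := by
        intro s
        rw [hM'row s]
        congr 1
        simp [hc']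
      rw [Finset.sum_congr rfl fun s _ => e2 s]
      have e3 : c' (Fin.last (n+1)) = 1 := by simp [hc']
      have e4 : M' (Fin.last (n+1)) = Pi.single (Fin.last (n+1)) x :=
        Matrix.updateRow_self
      rw [e3, e4, one_mul]
      by_cases ht : t = Fin.last (n+1)
      · subst ht
        rw [Pi.single_eq_same, hx]; ring
      · obtain ⟨t0, rfl⟩ := Fin.exists_castSucc_eq.mpr ht
        rw [Pi.single_eq_of_ne (Fin.castSucc_lt_last t0).ne, add_zero, hc t0]
    · rw [Matrix.updateRow_ne hr, hM', Matrix.updateRow_ne hr]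
  have hdet' : M'.det = 0 := by
    have := Matrix.det_updateRow_sum M' (Fin.last (n+1)) c'
    rw [← key] at this
    rw [hdet] at this
    have hclast : c' (Fin.last (n+1)) = 1 := by simp [hc']
    rw [hclast, one_smul] at this
    exact this.symm
  have hdet'' : M'.det = x * (M.submatrix Fin.castSucc Fin.castSucc).det := by
    have h1 : (Pi.single (Fin.last (n+1)) x : Fin (n+2) → F)
        = x • (Pi.single (Fin.last (n+1)) (1:F) : Fin (n+2) → F) := by
      ext t; rcases eq_or_ne t (Fin.last (n+1)) with h | h
      · subst h; simp
      · simp [Pi.single_eq_of_ne h]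
    rw [hM', h1, Matrix.det_updateRow_smul]
    rw [← Matrix.adjugate_apply, adj_last]
  rw [hdet''] at hdet'
  have hx0 : x = 0 := by
    rcases mul_eq_zero.mp hdet' with h | h
    · exact h
    · exact absurd h hsub
  rw [hx, sub_eq_zero] at hx0
  exact hx0.symm
/-- Symmetric version: relation between the first row and the others, extending from the
last `n+1` columns to the first column. -/
lemma row_ext0 {n : ℕ} (M : Matrix (Fin (n+2)) (Fin (n+2)) F) (hdet : M.det = 0)
    (hsub : (M.submatrix Fin.succ Fin.succ).det ≠ 0) (c : Fin (n+1) → F)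
    (hc : ∀ t : Fin (n+1), ∑ s, c s * M s.succ t.succ = M 0 t.succ) :
    ∑ s, c s * M s.succ 0 = M 0 0 := by
  set x : F := M 0 0 - ∑ s, c s * M s.succ 0 with hx
  set M' : Matrix (Fin (n+2)) (Fin (n+2)) F :=
      M.updateRow 0 (Pi.single 0 x) with hM'
  set c' : Fin (n+2) → F := Fin.cases 1 c with hc'
  have hM'row : ∀ s : Fin (n+1), M' s.succ = M s.succ := by
    intro s; exact Matrix.updateRow_ne (Fin.succ_ne_zero s)
  have key : M = M'.updateRow 0 (∑ r, c' r • M' r) := by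
    ext r t
    rcases eq_or_ne r 0 with hr | hr
    · subst hr
      rw [Matrix.updateRow_self]
      have e1 : (∑ r, c' r • M' r) t = ∑ r, c' r * M' r t := by
        simp [Finset.sum_apply]
      rw [e1, Fin.sum_univ_succ]
      have e2 : ∀ s : Fin (n+1), c' s.succ * M' s.succ t = c s * M s.succ t := by
        intro s
        have h5 : c' s.succ = c s := by simp [hc']
        rw [h5, hM'row s]
      rw [Finset.sum_congr rfl fun s _ => e2 s]
      have e3 : c' 0 = 1 := by simp [hc']
      have e4 : M' 0 = Pi.single 0 x := Matrix.updateRow_self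
      rw [e3, e4, one_mul]
      by_cases ht : t = 0
      · subst ht
        rw [Pi.single_eq_same, hx]; ring
      · obtain ⟨t0, rfl⟩ := Fin.exists_succ_eq_of_ne_zero ht
        rw [Pi.single_eq_of_ne (Fin.succ_ne_zero t0), zero_add]
        exact (hc t0).symm
    · rw [Matrix.updateRow_ne hr, hM', Matrix.updateRow_ne hr]
  have hdet' : M'.det = 0 := by
    have := Matrix.det_updateRow_sum M' 0 c'
    rw [← key] at this
    rw [hdet] at this
    have hclast : c' 0 = 1 := by simp [hc']
    rw [hclast, one_smul] at this
    exact this.symm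
  have hdet'' : M'.det = x * (M.submatrix Fin.succ Fin.succ).det := by
    have h1 : (Pi.single 0 x : Fin (n+2) → F)
        = x • (Pi.single 0 (1:F) : Fin (n+2) → F) := by
      ext t; rcases eq_or_ne t 0 with h | h
      · subst h; simp
      · simp [Pi.single_eq_of_ne h]
    rw [hM', h1, Matrix.det_updateRow_smul]
    rw [← Matrix.adjugate_apply, adj_zero]
  rw [hdet''] at hdet'
  have hx0 : x = 0 := by
    rcases mul_eq_zero.mp hdet' with h | h
    · exact h
    · exact absurd h hsub
  rw [hx, sub_eq_zero] at hx0
  exact hx0.symm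

variable {k : ℕ}

/-- Rows satisfy a linear recurrence with coefficients independent of the column. -/
lemma forward_rec (f : ℤ → ℤ → F)
    (hSL : ∀ i j : ℤ, (Matrix.of fun s t : Fin (k+1) => f (i+(s:ℕ)) (j+(t:ℕ))).det = 1)
    (htame : ∀ i j : ℤ, (Matrix.of fun s t : Fin (k+2) => f (i+(s:ℕ)) (j+(t:ℕ))).det = 0)
    (i : ℤ) :
    ∃ c : Fin (k+1) → F, ∀ j : ℤ, f (i+(k+1:ℕ)) j = ∑ s, c s * f (i+(s:ℕ)) j := by
  set W : ℤ → Matrix (Fin (k+1)) (Fin (k+1)) F :=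
    fun j => Matrix.of fun s t => f (i+(s:ℕ)) (j+(t:ℕ)) with hWdef
  have hWdet : ∀ j, (W j).det = 1 := fun j => hSL i j
  have hWu : ∀ j, IsUnit (W j).det := fun j => by rw [hWdet j]; exact isUnit_one
  have hunique : ∀ (j : ℤ) (u v : Fin (k+1) → F),
      u ᵥ* W j = v ᵥ* W j → u = v := by
    intro j u v h
    have h2 := congrArg (fun w => w ᵥ* (W j)⁻¹) h
    simpa [Matrix.vecMul_vecMul, Matrix.mul_nonsing_inv _ (hWu j),
      Matrix.vecMul_one] using h2
  set c : ℤ → Fin (k+1) → F :=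
    fun j => (fun t : Fin (k+1) => f (i+(k+1:ℕ)) (j+(t:ℕ))) ᵥ* (W j)⁻¹ with hcdef
  have hcW : ∀ j, c j ᵥ* W j = fun t : Fin (k+1) => f (i+(k+1:ℕ)) (j+(t:ℕ)) := by
    intro j
    rw [hcdef]
    rw [Matrix.vecMul_vecMul, Matrix.nonsing_inv_mul _ (hWu j), Matrix.vecMul_one]
  have hca : ∀ (j : ℤ) (t : Fin (k+1)),
      ∑ s, c j s * f (i+(s:ℕ)) (j+(t:ℕ)) = f (i+(k+1:ℕ)) (j+(t:ℕ)) := by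
    intro j t
    have := congrFun (hcW j) t
    simpa [Matrix.vecMul, dotProduct, hWdef] using this
  have hcb : ∀ j : ℤ,
      ∑ s, c j s * f (i+(s:ℕ)) (j+(k+1:ℕ)) = f (i+(k+1:ℕ)) (j+(k+1:ℕ)) := by
    intro j
    have hr := row_ext (n := k)
      (Matrix.of fun s t : Fin (k+2) => f (i+(s:ℕ)) (j+(t:ℕ))) (htame i j) ?_ (c j) ?_
    · simpa [Fin.val_last] using hr
    · have hsub : ((Matrix.of fun s t : Fin (k+2) => f (i+(s:ℕ)) (j+(t:ℕ))).submatrix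
          Fin.castSucc Fin.castSucc) = W j := by
        ext s t
        simp [hWdef]
      rw [hsub, hWdet j]
      exact one_ne_zero
    · intro t
      have := hca j t
      simpa [Fin.val_last] using this
  have hstep : ∀ j : ℤ, c (j+1) = c j := by
    intro j
    apply hunique (j+1)
    rw [hcW (j+1)]
    ext t
    show f (i+(k+1:ℕ)) ((j+1)+(t:ℕ)) = ∑ s, c j s * f (i+(s:ℕ)) ((j+1)+(t:ℕ))
    by_cases ht : (t:ℕ) = k
    · have harg : ∀ z : ℤ, z + (1:ℤ) + (t:ℕ) = z + (k+1:ℕ) := by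
        intro z; push_cast [ht]; ring
      rw [show (j+1)+(t:ℕ) = j + (k+1:ℕ) from harg j]
      exact (hcb j).symm
    · have hlt : (t:ℕ) + 1 < k + 1 := by omega
      have := hca j ⟨(t:ℕ)+1, hlt⟩
      have harg : ∀ z : ℤ, z + (1:ℤ) + (t:ℕ) = z + ((t:ℕ)+1 : ℕ) := by
        intro z; push_cast; ring
      rw [show (j+1)+(t:ℕ) = j + ((t:ℕ)+1 : ℕ) from harg j]
      exact (this).symm
  have hconst : ∀ j : ℤ, c j = c 0 := by
    intro j
    induction j using Int.induction_on with
    | zero => rfl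
    | succ m ih => rw [hstep m, ih]
    | pred m ih =>
      have := hstep (-(m:ℤ)-1)
      rw [show -(m:ℤ)-1+1 = -(m:ℤ) by ring] at this
      show c (-(m:ℤ)-1) = c 0
      rw [← this, ih]
  refine ⟨c 0, fun j => ?_⟩
  have := hca j 0
  rw [hconst j] at this
  simpa using this.symm

/-- Rows satisfy a backward linear recurrence. -/
lemma backward_rec (f : ℤ → ℤ → F)
    (hSL : ∀ i j : ℤ, (Matrix.of fun s t : Fin (k+1) => f (i+(s:ℕ)) (j+(t:ℕ))).det = 1)
    (htame : ∀ i j : ℤ, (Matrix.of fun s t : Fin (k+2) => f (i+(s:ℕ)) (j+(t:ℕ))).det = 0)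
    (i : ℤ) :
    ∃ d : Fin (k+1) → F, ∀ j : ℤ, f (i-1) j = ∑ s, d s * f (i+(s:ℕ)) j := by
  set W : ℤ → Matrix (Fin (k+1)) (Fin (k+1)) F :=
    fun j => Matrix.of fun s t => f (i+(s:ℕ)) (j+(t:ℕ)) with hWdef
  have hWdet : ∀ j, (W j).det = 1 := fun j => hSL i j
  have hWu : ∀ j, IsUnit (W j).det := fun j => by rw [hWdet j]; exact isUnit_one
  have hunique : ∀ (j : ℤ) (u v : Fin (k+1) → F),
      u ᵥ* W j = v ᵥ* W j → u = v := by
    intro j u v h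
    have h2 := congrArg (fun w => w ᵥ* (W j)⁻¹) h
    simpa [Matrix.vecMul_vecMul, Matrix.mul_nonsing_inv _ (hWu j),
      Matrix.vecMul_one] using h2
  set d : ℤ → Fin (k+1) → F :=
    fun j => (fun t : Fin (k+1) => f (i-1) ((j+1)+(t:ℕ))) ᵥ* (W (j+1))⁻¹ with hddef
  have hdW : ∀ j, d j ᵥ* W (j+1) = fun t : Fin (k+1) => f (i-1) ((j+1)+(t:ℕ)) := by
    intro j
    rw [hddef]
    rw [Matrix.vecMul_vecMul, Matrix.nonsing_inv_mul _ (hWu (j+1)), Matrix.vecMul_one]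
  have hda : ∀ (j : ℤ) (t : Fin (k+1)),
      ∑ s, d j s * f (i+(s:ℕ)) ((j+1)+(t:ℕ)) = f (i-1) ((j+1)+(t:ℕ)) := by
    intro j t
    have := congrFun (hdW j) t
    simpa [Matrix.vecMul, dotProduct, hWdef] using this
  have hdb : ∀ j : ℤ, ∑ s, d j s * f (i+(s:ℕ)) j = f (i-1) j := by
    intro j
    have hr := row_ext0 (n := k)
      (Matrix.of fun s t : Fin (k+2) => f ((i-1)+(s:ℕ)) (j+(t:ℕ))) (htame (i-1) j) ?_ (d j) ?_
    · have e0 : ∀ s : Fin (k+1), (i-1) + ((s.succ :Fin (k+2)):ℕ) = i + (s:ℕ) := by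
        intro s; rw [Fin.val_succ]; push_cast; ring
      calc ∑ s, d j s * f (i+(s:ℕ)) j
          = ∑ s : Fin (k+1), d j s * f ((i-1)+((s.succ : Fin (k+2)):ℕ)) (j+((0:Fin (k+2)):ℕ)) := by
            refine Finset.sum_congr rfl fun s _ => ?_
            rw [e0 s]
            norm_num
        _ = f ((i-1)+((0:Fin (k+2)):ℕ)) (j+((0:Fin (k+2)):ℕ)) := hr
        _ = f (i-1) j := by norm_num
    · have hsub : ((Matrix.of fun s t : Fin (k+2) => f ((i-1)+(s:ℕ)) (j+(t:ℕ))).submatrix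
          Fin.succ Fin.succ) = W (j+1) := by
        ext s t
        have e1 : (i-1) + ((s.succ : Fin (k+2)):ℕ) = i + (s:ℕ) := by
          rw [Fin.val_succ]; push_cast; ring
        have e2 : j + ((t.succ : Fin (k+2)):ℕ) = (j+1) + (t:ℕ) := by
          rw [Fin.val_succ]; push_cast; ring
        simp only [Matrix.submatrix_apply, Matrix.of_apply, hWdef]
        rw [e1, e2]
      rw [hsub, hWdet (j+1)]
      exact one_ne_zero
    · intro t
      have := hda j t
      have e1 : ∀ s : Fin (k+1), (i-1) + ((s.succ : Fin (k+2)):ℕ) = i + (s:ℕ) := by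
        intro s; rw [Fin.val_succ]; push_cast; ring
      have e2 : j + ((t.succ : Fin (k+2)):ℕ) = (j+1) + (t:ℕ) := by
        rw [Fin.val_succ]; push_cast; ring
      simp only [Matrix.of_apply]
      rw [e2]
      calc ∑ s : Fin (k+1), d j s * f ((i-1)+((s.succ : Fin (k+2)):ℕ)) ((j+1)+(t:ℕ))
          = ∑ s : Fin (k+1), d j s * f (i+(s:ℕ)) ((j+1)+(t:ℕ)) := by
            refine Finset.sum_congr rfl fun s _ => ?_
            rw [e1 s]
        _ = f (i-1) ((j+1)+(t:ℕ)) := hda j t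
        _ = f ((i-1)+((0:Fin (k+2)):ℕ)) ((j+1)+(t:ℕ)) := by norm_num
  have hstep : ∀ j : ℤ, d (j+1) = d j := by
    intro j
    apply hunique (j+1)
    have h2 : d j ᵥ* W (j+1) = fun t : Fin (k+1) => f (i-1) ((j+1)+(t:ℕ)) := hdW j
    rw [h2]
    ext t
    show (∑ s, d (j+1) s * f (i+(s:ℕ)) ((j+1)+(t:ℕ))) = f (i-1) ((j+1)+(t:ℕ))
    by_cases ht : (t:ℕ) = 0
    · have harg : (j+1)+((t:ℕ):ℤ) = j+1 := by rw [ht]; push_cast; ring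
      rw [harg]
      exact hdb (j+1)
    · have hlt : (t:ℕ) - 1 < k + 1 := by omega
      have := hda (j+1) ⟨(t:ℕ)-1, hlt⟩
      have harg : (j+1)+((t:ℕ):ℤ) = (j+1+1) + (((t:ℕ)-1 : ℕ):ℤ) := by
        have : (t:ℕ) = ((t:ℕ)-1) + 1 := by omega
        rw [this]; push_cast; ring
      rw [harg]
      exact this
  have hconst : ∀ j : ℤ, d j = d 0 := by
    intro j
    induction j using Int.induction_on with
    | zero => rfl
    | succ m ih => rw [hstep m, ih]
    | pred m ih =>
      have := hstep (-(m:ℤ)-1)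
      rw [show -(m:ℤ)-1+1 = -(m:ℤ) by ring] at this
      show d (-(m:ℤ)-1) = d 0
      rw [← this, ih]
  refine ⟨d 0, fun j => ?_⟩
  rw [← hconst j]
  exact (hdb j).symm

/-- Every row of `f` is a linear combination of rows `0, …, k`. -/
lemma global_expand (f : ℤ → ℤ → F)
    (hSL : ∀ i j : ℤ, (Matrix.of fun s t : Fin (k+1) => f (i+(s:ℕ)) (j+(t:ℕ))).det = 1)
    (htame : ∀ i j : ℤ, (Matrix.of fun s t : Fin (k+2) => f (i+(s:ℕ)) (j+(t:ℕ))).det = 0)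
    (i : ℤ) :
    ∃ e : Fin (k+1) → F, ∀ j : ℤ, f i j = ∑ m, e m * f ((m:ℕ):ℤ) j := by
  have H : ∀ m : ℕ, ∀ i : ℤ, -(m:ℤ) ≤ i → i ≤ (k:ℤ) + m →
      ∃ e : Fin (k+1) → F, ∀ j : ℤ, f i j = ∑ mm, e mm * f ((mm:ℕ):ℤ) j := by
    intro m
    induction m with
    | zero =>
      intro i h1 h2
      have h0 : 0 ≤ i := by simpa using h1
      have hik : i.toNat < k + 1 := by omega
      set v : Fin (k+1) := ⟨i.toNat, hik⟩ with hv
      have hvi : ((v:ℕ):ℤ) = i := by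
        simp [hv, Int.toNat_of_nonneg h0]
      refine ⟨Pi.single v 1, fun j => ?_⟩
      rw [Finset.sum_eq_single v]
      · rw [Pi.single_eq_same, one_mul, hvi]
      · intro b _ hb
        rw [Pi.single_eq_of_ne hb, zero_mul]
      · intro h; exact absurd (Finset.mem_univ v) h
    | succ m ih =>
      intro i h1 h2
      by_cases hin : -(m:ℤ) ≤ i ∧ i ≤ (k:ℤ) + m
      · exact ih i hin.1 hin.2
      · have hi : i = -((m:ℕ):ℤ)-1 ∨ i = (k:ℤ)+m+1 := by
          push_cast at h1 h2 ⊢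
          omega
        rcases hi with hi | hi
        · obtain ⟨d, hd⟩ := backward_rec f hSL htame (i+1)
          have hrows : ∀ s : Fin (k+1),
              ∃ e : Fin (k+1) → F, ∀ j, f ((i+1)+(s:ℕ)) j = ∑ mm, e mm * f ((mm:ℕ):ℤ) j := by
            intro s
            have hs : (s:ℕ) ≤ k := Nat.lt_succ_iff.mp s.isLt
            refine ih ((i+1)+(s:ℕ)) ?_ ?_
            · push_cast [hi]; omega
            · push_cast [hi]; omega
          choose e he using hrows
          refine ⟨fun mm => ∑ s, d s * e s mm, fun j => ?_⟩
          have h3 : f i j = f ((i+1)-1) j := by norm_num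
          rw [h3, hd j]
          calc ∑ s, d s * f ((i+1)+(s:ℕ)) j
              = ∑ s, ∑ mm, d s * (e s mm * f ((mm:ℕ):ℤ) j) := by
                refine Finset.sum_congr rfl fun s _ => ?_
                rw [he s j, Finset.mul_sum]
            _ = ∑ mm, ∑ s, d s * (e s mm * f ((mm:ℕ):ℤ) j) := Finset.sum_comm
            _ = ∑ mm, (∑ s, d s * e s mm) * f ((mm:ℕ):ℤ) j := by
                refine Finset.sum_congr rfl fun mm _ => ?_
                rw [Finset.sum_mul]
                refine Finset.sum_congr rfl fun s _ => by ring
        · obtain ⟨c, hc⟩ := forward_rec f hSL htame (i-(k+1:ℕ))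
          have hrows : ∀ s : Fin (k+1),
              ∃ e : Fin (k+1) → F, ∀ j, f ((i-(k+1:ℕ))+(s:ℕ)) j = ∑ mm, e mm * f ((mm:ℕ):ℤ) j := by
            intro s
            have hs : (s:ℕ) ≤ k := Nat.lt_succ_iff.mp s.isLt
            refine ih ((i-(k+1:ℕ))+(s:ℕ)) ?_ ?_
            · push_cast [hi]; omega
            · push_cast [hi]; omega
          choose e he using hrows
          refine ⟨fun mm => ∑ s, c s * e s mm, fun j => ?_⟩
          have h3 : f i j = f ((i-(k+1:ℕ))+(k+1:ℕ)) j := by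
            have : i = (i-(k+1:ℕ))+(k+1:ℕ) := by push_cast; ring
            rw [← this]
          rw [h3, hc j]
          calc ∑ s, c s * f ((i-(k+1:ℕ))+(s:ℕ)) j
              = ∑ s, ∑ mm, c s * (e s mm * f ((mm:ℕ):ℤ) j) := by
                refine Finset.sum_congr rfl fun s _ => ?_
                rw [he s j, Finset.mul_sum]
            _ = ∑ mm, ∑ s, c s * (e s mm * f ((mm:ℕ):ℤ) j) := Finset.sum_comm
            _ = ∑ mm, (∑ s, c s * e s mm) * f ((mm:ℕ):ℤ) j := by
                refine Finset.sum_congr rfl fun mm _ => ?_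
                rw [Finset.sum_mul]
                refine Finset.sum_congr rfl fun s _ => by ring
  exact H i.natAbs i (by omega) (by omega)


end ProjDualAux

/-- **The projective dual of a tame `SL_{k+1}`-tiling is a tame `SL_{k+1}`-tiling.**
For a tame `SL_{k+1}`-tiling `f` over a field `F`, the projective dual
`f* (i, j) := adjMinor f k i j` is again a tame `SL_{k+1}`-tiling: all its adjacent
minors of order `k+1` equal `1` and all its adjacent minors of order `k+2` vanish. -/
theorem projective_dual_is_tame_slk_tiling {F : Type*} [Field F] (k : ℕ) (hk : 1 ≤ k)
    (f : ℤ → ℤ → F)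
    (hSL : ∀ i j : ℤ, adjMinor f (k + 1) i j = 1)
    (htame : ∀ i j : ℤ, adjMinor f (k + 2) i j = 0) :
    (∀ i j : ℤ, adjMinor (fun i' j' => adjMinor f k i' j') (k + 1) i j = 1) ∧
    (∀ i j : ℤ, adjMinor (fun i' j' => adjMinor f k i' j') (k + 2) i j = 0) := by
  classical
  have hSL' : ∀ i j : ℤ, (Matrix.of fun s t : Fin (k+1) => f (i+(s:ℕ)) (j+(t:ℕ))).det = 1 := hSL
  have htame' : ∀ i j : ℤ, (Matrix.of fun s t : Fin (k+2) => f (i+(s:ℕ)) (j+(t:ℕ))).det = 0 := htame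
  choose a ha using fun i => ProjDualAux.global_expand f hSL' htame' i
  set A : ℤ → Matrix (Fin (k+1)) (Fin (k+1)) F :=
    fun i => Matrix.of fun s m => a (i+(s:ℕ)) m with hA
  set B : ℤ → Matrix (Fin (k+1)) (Fin (k+1)) F :=
    fun j => Matrix.of fun m t => f ((m:ℕ):ℤ) (j+(t:ℕ)) with hB
  have hAB : ∀ i j : ℤ,
      (Matrix.of fun s t : Fin (k+1) => f (i+(s:ℕ)) (j+(t:ℕ))) = A i * B j := by
    intro i j; ext s t
    simp only [Matrix.mul_apply, Matrix.of_apply, hA, hB]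
    exact ha (i+(s:ℕ)) (j+(t:ℕ))
  have hdetB : ∀ j : ℤ, (B j).det = 1 := by
    intro j
    have h0 : B j = Matrix.of fun s t : Fin (k+1) => f ((0:ℤ)+(s:ℕ)) (j+(t:ℕ)) := by
      ext s t; simp [hB]
    rw [h0]; exact hSL' 0 j
  have hdetA : ∀ i : ℤ, (A i).det = 1 := by
    intro i
    have h1 := hSL' i 0
    rw [hAB i 0, Matrix.det_mul, hdetB 0, mul_one] at h1
    exact h1
  set α : ℤ → Fin (k+1) → F := fun i m => (A i).adjugate m (Fin.last k) with hα
  set β : ℤ → Fin (k+1) → F := fun j m => (B j).adjugate (Fin.last k) m with hβ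
  have hdual : ∀ i j : ℤ, adjMinor f k i j = ∑ m, α i m * β j m := by
    intro i j
    have h1 : adjMinor f k i j = ((Matrix.of fun s t : Fin (k+1) =>
        f (i+(s:ℕ)) (j+(t:ℕ))).submatrix Fin.castSucc Fin.castSucc).det := by
      rfl
    rw [h1, ← ProjDualAux.adj_last, hAB i j, Matrix.adjugate_mul_distrib, Matrix.mul_apply]
    exact Finset.sum_congr rfl fun m _ => by rw [hα, hβ]; ring
  have hαδ : ∀ (i : ℤ) (u : Fin (k+1)),
      ∑ m, a (i+(u:ℕ)) m * α i m = if u = Fin.last k then 1 else 0 := by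
    intro i u
    have h1 := congrFun (congrFun (Matrix.mul_adjugate (A i)) u) (Fin.last k)
    rw [Matrix.mul_apply] at h1
    rw [Matrix.smul_apply, Matrix.one_apply, hdetA i, smul_eq_mul, one_mul] at h1
    rw [hα]
    convert h1 using 2
    rfl
  have hβδ : ∀ (j : ℤ) (u : Fin (k+1)),
      ∑ m, β j m * f ((m:ℕ):ℤ) (j+(u:ℕ)) = if u = Fin.last k then 1 else 0 := by
    intro j u
    have h1 := congrFun (congrFun (Matrix.adjugate_mul (B j)) (Fin.last k)) u
    rw [Matrix.mul_apply] at h1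
    rw [Matrix.smul_apply, Matrix.one_apply, hdetB j, smul_eq_mul, one_mul] at h1
    rw [hβ]
    have h2 : (Fin.last k = u) ↔ (u = Fin.last k) := eq_comm
    rw [if_congr h2 rfl rfl] at h1
    convert h1 using 2
    rfl
  have hdetα : ∀ i : ℤ, (Matrix.of fun s m : Fin (k+1) => α (i+(s:ℕ)) m).det = 1 := by
    intro i
    set Q : Matrix (Fin (k+1)) (Fin (k+1)) F :=
      (Matrix.of fun s m : Fin (k+1) => α (i+(s:ℕ)) m) * (A (i+(k:ℕ)))ᵀ with hQ
    have hQentry : ∀ s r : Fin (k+1), r ≤ s → Q s r = if r = s then 1 else 0 := by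
      intro s r hrs
      have hle : (r:ℕ) ≤ (s:ℕ) := hrs
      have hsk : (s:ℕ) ≤ k := Nat.lt_succ_iff.mp s.isLt
      have hu : k + (r:ℕ) - (s:ℕ) < k + 1 := by omega
      have harg : (i+(k:ℕ)) + ((r:ℕ):ℤ) = (i+(s:ℕ)) + (((⟨k + (r:ℕ) - (s:ℕ), hu⟩:Fin (k+1)):ℕ):ℤ) := by
        push_cast; omega
      have h2 : Q s r
          = ∑ m, a ((i+(s:ℕ))+(((⟨k + (r:ℕ) - (s:ℕ), hu⟩:Fin (k+1)):ℕ):ℤ)) m * α (i+(s:ℕ)) m := by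
        rw [hQ, Matrix.mul_apply]
        refine Finset.sum_congr rfl fun m _ => ?_
        simp only [Matrix.transpose_apply, Matrix.of_apply, hA]
        rw [← harg]
        ring
      rw [h2, hαδ (i+(s:ℕ)) ⟨k + (r:ℕ) - (s:ℕ), hu⟩]
      have h3 : ((⟨k + (r:ℕ) - (s:ℕ), hu⟩:Fin (k+1)) = Fin.last k) ↔ (r = s) := by
        rw [Fin.ext_iff, Fin.ext_iff]
        simp only [Fin.val_last]
        omega
      rw [if_congr h3 rfl rfl]
    have htri : Q.BlockTriangular id := by
      intro s r hrs
      have hne : r ≠ s := ne_of_lt hrs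
      rw [hQentry s r (le_of_lt hrs), if_neg hne]
    have hdetQ : Q.det = 1 := by
      rw [Matrix.det_of_upperTriangular htri]
      refine Finset.prod_eq_one fun s _ => ?_
      rw [hQentry s s le_rfl, if_pos rfl]
    rw [hQ, Matrix.det_mul, Matrix.det_transpose, hdetA] at hdetQ
    simpa using hdetQ
  have hdetβ : ∀ j : ℤ, (Matrix.of fun m t : Fin (k+1) => β (j+(t:ℕ)) m).det = 1 := by
    intro j
    set R : Matrix (Fin (k+1)) (Fin (k+1)) F :=
      (Matrix.of fun m t : Fin (k+1) => β (j+(t:ℕ)) m)ᵀ * B (j+(k:ℕ)) with hR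
    have hRentry : ∀ t t' : Fin (k+1), t' ≤ t → R t t' = if t' = t then 1 else 0 := by
      intro t t' hts
      have hle : (t':ℕ) ≤ (t:ℕ) := hts
      have htk : (t:ℕ) ≤ k := Nat.lt_succ_iff.mp t.isLt
      have hu : k + (t':ℕ) - (t:ℕ) < k + 1 := by omega
      have harg : (j+(k:ℕ)) + ((t':ℕ):ℤ) = (j+(t:ℕ)) + (((⟨k + (t':ℕ) - (t:ℕ), hu⟩:Fin (k+1)):ℕ):ℤ) := by
        push_cast; omega
      have h2 : R t t'
          = ∑ m, β (j+(t:ℕ)) m * f ((m:ℕ):ℤ) ((j+(t:ℕ))+(((⟨k + (t':ℕ) - (t:ℕ), hu⟩:Fin (k+1)):ℕ):ℤ)) := by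
        rw [hR, Matrix.mul_apply]
        refine Finset.sum_congr rfl fun m _ => ?_
        simp only [Matrix.transpose_apply, Matrix.of_apply, hB]
        rw [← harg]
      rw [h2, hβδ (j+(t:ℕ)) ⟨k + (t':ℕ) - (t:ℕ), hu⟩]
      have h3 : ((⟨k + (t':ℕ) - (t:ℕ), hu⟩:Fin (k+1)) = Fin.last k) ↔ (t' = t) := by
        rw [Fin.ext_iff, Fin.ext_iff]
        simp only [Fin.val_last]
        omega
      rw [if_congr h3 rfl rfl]
    have htri : R.BlockTriangular id := by
      intro t t' hts
      have hne : t' ≠ t := ne_of_lt hts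
      rw [hRentry t t' (le_of_lt hts), if_neg hne]
    have hdetR : R.det = 1 := by
      rw [Matrix.det_of_upperTriangular htri]
      refine Finset.prod_eq_one fun t _ => ?_
      rw [hRentry t t le_rfl, if_pos rfl]
    rw [hR, Matrix.det_mul, Matrix.det_transpose, hdetB] at hdetR
    simpa using hdetR
  constructor
  · intro i j
    show (Matrix.of fun s t : Fin (k+1) => adjMinor f k (i+(s:ℕ)) (j+(t:ℕ))).det = 1
    have hfact : (Matrix.of fun s t : Fin (k+1) => adjMinor f k (i+(s:ℕ)) (j+(t:ℕ)))
        = (Matrix.of fun s m : Fin (k+1) => α (i+(s:ℕ)) m)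
          * (Matrix.of fun m t : Fin (k+1) => β (j+(t:ℕ)) m) := by
      ext s t
      rw [Matrix.mul_apply, Matrix.of_apply]
      exact hdual (i+(s:ℕ)) (j+(t:ℕ))
    rw [hfact, Matrix.det_mul, hdetα i, hdetβ j, mul_one]
  · intro i j
    show (Matrix.of fun s t : Fin (k+2) => adjMinor f k (i+(s:ℕ)) (j+(t:ℕ))).det = 0
    set C : Matrix (Fin (k+2)) (Fin (k+1)) F := Matrix.of fun s m => α (i+(s:ℕ)) m with hC
    set D : Matrix (Fin (k+1)) (Fin (k+2)) F := Matrix.of fun m t => β (j+(t:ℕ)) m with hD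
    have hfact : (Matrix.of fun s t : Fin (k+2) => adjMinor f k (i+(s:ℕ)) (j+(t:ℕ)))
        = C * D := by
      ext s t
      rw [Matrix.mul_apply, Matrix.of_apply]
      exact hdual (i+(s:ℕ)) (j+(t:ℕ))
    rw [hfact]
    set D' : Matrix (Fin (k+2)) (Fin (k+2)) F :=
      Matrix.of fun r t => if h : (r:ℕ) < k+1 then D ⟨(r:ℕ), h⟩ t else 0 with hD'
    have hD'det : D'.det = 0 := by
      refine Matrix.det_eq_zero_of_row_eq_zero (Fin.last (k+1)) fun t => ?_
      simp [hD', Fin.val_last]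
    obtain ⟨v, hv0, hv⟩ := Matrix.exists_mulVec_eq_zero_iff.mpr hD'det
    have hDv : D *ᵥ v = 0 := by
      ext m
      have h2 := congrFun hv (Fin.castSucc m)
      have h3 : D' (Fin.castSucc m) = D m := by
        ext t
        simp only [hD', Matrix.of_apply, Fin.coe_castSucc]
        rw [dif_pos m.isLt]
      rw [Matrix.mulVec] at h2 ⊢
      rw [h3] at h2
      exact h2
    apply Matrix.exists_mulVec_eq_zero_iff.mp
    exact ⟨v, hv0, by rw [← Matrix.mulVec_mulVec, hDv, Matrix.mulVec_zero]⟩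
end

section
/- Let k ≥ 1 and w ≥ 1 be integers and set n := k + w + 2. Let a^j : ℤ → ℝ (1 ≤ j ≤ k) be coefficients, extended by the conventions a_i^0 := 1, a_i^{k+1} := 1 and a_i^s := 0 for s > k+1. Assume the order-(k+1) difference equation V_i = a_i^1·V_{i-1} − a_i^2·V_{i-2} + ⋯ + (−1)^{k-1}·a_i^k·V_{i-k} + (−1)^k·V_{i-k-1} is n-superperiodic, i.e. a_{i+n}^j = a_i^j for all i,j and every solution V satisfies V_{i+n} = (−1)^k·V_i. For 0 ≤ j ≤ w−1 define α_i^{w-j} as the determinant of the (j+1)×(j+1) matrix whose (r,c)-entry (1 ≤ r,c ≤ j+1) is a_{i+r}^{r-c+1} if c ≤ r, is 1 if c = r+1, and is 0 if c > r+1. Then the Gale dual equation of order w+1, namely W_i = α_i^1·W_{i-1} − α_i^2·W_{i-2} + ⋯ + (−1)^{w-1}·α_i^w·W_{i-w} + (−1)^w·W_{i-w-1}, is n-superperiodic: its coefficients satisfy α_{i+n}^j = α_i^j for all i and 1 ≤ j ≤ w, and every solution W : ℤ → ℝ satisfies W_{i+n} = (−1)^w·W_i for all i. -/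
/-- The coefficient `α_i^s` of the combinatorial Gale transform: for `1 ≤ s ≤ w`,
writing `j = w - s`, it is the determinant of the `(j+1) × (j+1)` Hessenberg matrix
whose `(r, c)`-entry (with `1 ≤ r, c ≤ j+1`) is `a_{i+r}^{r-c+1}` if `c ≤ r`,
is `1` if `c = r + 1`, and is `0` if `c > r + 1`. -/
noncomputable def galeCoeff (a : ℤ → ℕ → ℝ) (w : ℕ) (i : ℤ) (s : ℕ) : ℝ :=
  Matrix.det (Matrix.of fun r c : Fin (w - s + 1) =>
    if (c : ℕ) ≤ (r : ℕ) then a (i + (r : ℕ) + 1) ((r : ℕ) - (c : ℕ) + 1)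
    else if (c : ℕ) = (r : ℕ) + 1 then 1 else 0)

/-! ### Auxiliary definitions -/

noncomputable def hessEnt (a : ℤ → ℕ → ℝ) (y : ℤ) (R C : ℕ) : ℝ :=
  if C ≤ R then a (y + R + 1) (R - C + 1) else if C = R + 1 then 1 else 0

noncomputable def hess (a : ℤ → ℕ → ℝ) (y : ℤ) (sz : ℕ) : Matrix (Fin sz) (Fin sz) ℝ :=
  Matrix.of fun r c : Fin sz => hessEnt a y r c

lemma hess_apply (a : ℤ → ℕ → ℝ) (y : ℤ) (sz : ℕ) (r c : Fin sz) :
    hess a y sz r c = hessEnt a y r c := rfl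

lemma galeCoeff_eq_hess (a : ℤ → ℕ → ℝ) (w : ℕ) (i : ℤ) (s : ℕ) :
    galeCoeff a w i s = (hess a i (w - s + 1)).det := rfl

/-- The extended Gale coefficients: `1` at `s = 0` and `s = w+1`, `galeCoeff` in between,
`0` beyond. -/
noncomputable def abar (a : ℤ → ℕ → ℝ) (w : ℕ) (i : ℤ) (s : ℕ) : ℝ :=
  if s = 0 then 1 else if s ≤ w then galeCoeff a w i s else if s = w + 1 then 1 else 0

lemma abar_zero (a : ℤ → ℕ → ℝ) (w : ℕ) (i : ℤ) : abar a w i 0 = 1 := rfl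

lemma abar_top (a : ℤ → ℕ → ℝ) (w : ℕ) (i : ℤ) : abar a w i (w + 1) = 1 := by
  rw [abar, if_neg (by omega), if_neg (by omega), if_pos rfl]

lemma abar_gale (a : ℤ → ℕ → ℝ) (w : ℕ) (i : ℤ) (s : ℕ) (h1 : 1 ≤ s) (h2 : s ≤ w) :
    abar a w i s = galeCoeff a w i s := by
  rw [abar, if_neg (by omega), if_pos h2]

lemma abar_eq_hess (a : ℤ → ℕ → ℝ) (w : ℕ) (i : ℤ) (s : ℕ) (hs : s ≤ w) :
    abar a w i (w + 1 - s) = (hess a i s).det := by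
  rcases Nat.eq_zero_or_pos s with h0 | hpos
  · subst h0
    have : w + 1 - 0 = w + 1 := rfl
    rw [this, abar_top]
    have : (hess a i 0) = Matrix.of (fun r c : Fin 0 => hessEnt a i r c) := rfl
    rw [Matrix.det_fin_zero]
  · have h1 : 1 ≤ w + 1 - s := by omega
    have h2 : w + 1 - s ≤ w := by omega
    rw [abar_gale a w i _ h1 h2, galeCoeff_eq_hess]
    have : w - (w + 1 - s) + 1 = s := by omega
    rw [this]

lemma neg_one_pow_sub (m s : ℕ) (h : s ≤ m) : ((-1 : ℝ)) ^ (m - s) = (-1) ^ m * (-1) ^ s := by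
  have h2 : (-1 : ℝ) ^ (m - s) * (-1) ^ s = (-1) ^ m := by
    rw [← pow_add]; congr 1; omega
  have h1 : (-1 : ℝ) ^ s * (-1) ^ s = 1 := by
    rw [← pow_add, ← two_mul, pow_mul]; norm_num
  calc ((-1 : ℝ)) ^ (m - s) = (-1) ^ (m - s) * ((-1) ^ s * (-1) ^ s) := by rw [h1, mul_one]
    _ = ((-1) ^ (m - s) * (-1) ^ s) * (-1) ^ s := by ring
    _ = (-1) ^ m * (-1) ^ s := by rw [h2]

lemma neg_one_mul_self_pow (m : ℕ) : (-1 : ℝ) ^ m * (-1) ^ m = 1 := by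
  rw [← pow_add, ← two_mul, pow_mul]; norm_num

/-! ### The submatrix computation for Hessenberg matrices -/

lemma det_hess_submatrix (a : ℤ → ℕ → ℝ) (y : ℤ) (sz : ℕ) (t : Fin (sz + 1)) :
    ((hess a y (sz + 1)).submatrix t.succAbove Fin.succ).det
      = (hess a (y + (t : ℕ) + 1) (sz - (t : ℕ))).det := by
  have ht : (t : ℕ) ≤ sz := Fin.is_le t
  have h : (t : ℕ) + (sz - (t : ℕ)) = sz := by omega
  set M := (hess a y (sz + 1)).submatrix t.succAbove Fin.succ with hMdef
  let e : Fin (t : ℕ) ⊕ Fin (sz - (t : ℕ)) ≃ Fin sz := finSumFinEquiv.trans (finCongr h)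
  have hval : ∀ i : Fin sz, ((t.succAbove i) : ℕ) = if (i : ℕ) < (t : ℕ) then (i : ℕ) else (i : ℕ) + 1 := by
    intro i
    rcases lt_or_ge ((i : ℕ)) ((t : ℕ)) with h' | h'
    · rw [Fin.succAbove_of_castSucc_lt _ _ (by simpa [Fin.lt_def] using h')]
      simp [h']
    · rw [Fin.succAbove_of_le_castSucc _ _ (by simpa [Fin.le_def] using h')]
      simp [Fin.val_succ, Nat.not_lt.mpr h']
  have hMval : ∀ i j : Fin sz, M i j
      = hessEnt a y (if (i : ℕ) < (t : ℕ) then (i : ℕ) else (i : ℕ) + 1) ((j : ℕ) + 1) := by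
    intro i j
    show (hess a y (sz + 1)) (t.succAbove i) (Fin.succ j) = _
    rw [hess]
    simp only [Matrix.of_apply]
    rw [hval i, Fin.val_succ]
  have heinl : ∀ u : Fin (t : ℕ), ((e (Sum.inl u)) : ℕ) = (u : ℕ) := by
    intro u; simp [e, finSumFinEquiv]
  have heinr : ∀ u : Fin (sz - (t : ℕ)), ((e (Sum.inr u)) : ℕ) = (t : ℕ) + (u : ℕ) := by
    intro u; simp [e, finSumFinEquiv]
  let A : Matrix (Fin (t : ℕ)) (Fin (t : ℕ)) ℝ := fun u v => M (e (Sum.inl u)) (e (Sum.inl v))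
  let C : Matrix (Fin (sz - (t : ℕ))) (Fin (t : ℕ)) ℝ := fun u v => M (e (Sum.inr u)) (e (Sum.inl v))
  let D : Matrix (Fin (sz - (t : ℕ))) (Fin (sz - (t : ℕ))) ℝ := fun u v => M (e (Sum.inr u)) (e (Sum.inr v))
  have hsub : M.submatrix e e = Matrix.fromBlocks A 0 C D := by
    ext i j
    cases i with
    | inl u =>
      cases j with
      | inl v => rfl
      | inr v =>
        show M (e (Sum.inl u)) (e (Sum.inr v)) = 0
        rw [hMval, heinl, heinr]
        have hu : (u : ℕ) < (t : ℕ) := u.isLt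
        rw [hessEnt]
        rw [if_pos hu, if_neg (by omega), if_neg (by omega)]
    | inr u =>
      cases j with
      | inl v => rfl
      | inr v => rfl
  have hA : A.det = 1 := by
    have htri : A.BlockTriangular OrderDual.toDual := by
      intro i j hij
      have hij' : (i : ℕ) < (j : ℕ) := hij
      show M _ _ = 0
      rw [hMval, heinl, heinl, hessEnt]
      rw [if_pos i.isLt, if_neg (by omega), if_neg (by omega)]
    rw [Matrix.det_of_lowerTriangular A htri]
    apply Finset.prod_eq_one
    intro i _
    show M _ _ = 1
    rw [hMval, heinl, hessEnt]
    rw [if_pos i.isLt, if_neg (by omega), if_pos rfl]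
  have hD : D = hess a (y + (t : ℕ) + 1) (sz - (t : ℕ)) := by
    ext u v
    show M _ _ = _
    rw [hMval, heinr, heinr, hess]
    simp only [Matrix.of_apply]
    rw [if_neg (by omega)]
    rw [hessEnt, hessEnt]
    by_cases hc : (v : ℕ) ≤ (u : ℕ)
    · rw [if_pos (by omega), if_pos hc]
      congr 1
      · push_cast; ring
      · omega
    · rw [if_neg (by omega), if_neg hc]
      by_cases hc2 : (v : ℕ) = (u : ℕ) + 1
      · rw [if_pos (by omega), if_pos hc2]
      · rw [if_neg (by omega), if_neg hc2]
  calc M.det = (M.submatrix e e).det := (Matrix.det_submatrix_equiv_self e M).symm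
    _ = (Matrix.fromBlocks A 0 C D).det := by rw [hsub]
    _ = A.det * D.det := Matrix.det_fromBlocks_zero₁₂ A C D
    _ = (hess a (y + (t : ℕ) + 1) (sz - (t : ℕ))).det := by rw [hA, hD, one_mul]

/-! ### The key formal determinant identity -/

lemma key_det (a : ℤ → ℕ → ℝ) (ha0 : ∀ i : ℤ, a i 0 = 1) (m : ℕ) (hm : 1 ≤ m) (q : ℤ) :
    ∑ s ∈ Finset.range (m + 1),
      (-1 : ℝ) ^ s * (hess a (q - s) s).det * a (q - s) (m - s) = 0 := by
  set K : Matrix (Fin (m + 1)) (Fin (m + 1)) ℝ :=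
    Matrix.of (fun r c : Fin (m + 1) =>
      if (c : ℕ) = 0 then a (q - m + r) r else hessEnt a (q - m - 1) r c) with hK
  have Kapp : ∀ r c : Fin (m + 1),
      K r c = if (c : ℕ) = 0 then a (q - m + r) r else hessEnt a (q - m - 1) r c :=
    fun _ _ => rfl
  have h0 : K.det = 0 := by
    apply Matrix.det_zero_of_column_eq (i := (⟨0, by omega⟩ : Fin (m + 1))) (j := ⟨1, by omega⟩)
    · simp [Fin.ext_iff]
    · intro r
      rw [Kapp, Kapp]
      have : ((⟨0, by omega⟩ : Fin (m + 1)) : ℕ) = 0 := rfl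
      rw [if_pos this]
      have h1v : ((⟨1, by omega⟩ : Fin (m + 1)) : ℕ) = 1 := rfl
      rw [if_neg (by rw [h1v]; omega), h1v, hessEnt]
      by_cases hr : 1 ≤ (r : ℕ)
      · rw [if_pos hr]
        congr 1
        · ring
        · omega
      · have hr0 : (r : ℕ) = 0 := by omega
        rw [if_neg (by omega), if_pos (by omega), hr0, ha0]
  have h1 : K.det = ∑ t : Fin (m + 1),
      (-1 : ℝ) ^ (t : ℕ) * a (q - m + t) t * (hess a (q - m + (t : ℕ)) (m - t)).det := by
    rw [Matrix.det_succ_column_zero]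
    apply Finset.sum_congr rfl
    intro t _
    have hA0 : K t 0 = a (q - m + t) t := by
      rw [Kapp, if_pos (by simp)]
    have hsubeq : K.submatrix t.succAbove Fin.succ
        = (hess a (q - m - 1) (m + 1)).submatrix t.succAbove Fin.succ := by
      ext r c
      rw [Matrix.submatrix_apply, Matrix.submatrix_apply, Kapp, hess_apply,
        if_neg (by simp [Fin.val_succ])]
    have hsubdet : (K.submatrix t.succAbove Fin.succ).det
        = (hess a (q - (m : ℤ) + (t : ℕ)) (m - (t : ℕ))).det := by
      rw [hsubeq, det_hess_submatrix]
      have : q - (m : ℤ) - 1 + (t : ℕ) + 1 = q - (m : ℤ) + (t : ℕ) := by ring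
      rw [this]
    rw [hA0, hsubdet]
  have h2 : ∑ t ∈ Finset.range (m + 1),
      (-1 : ℝ) ^ t * a (q - m + t) t * (hess a (q - m + (t : ℕ)) (m - t)).det = 0 := by
    rw [← Fin.sum_univ_eq_sum_range, ← h1, h0]
  have h3 := Finset.sum_range_reflect
    (fun t => (-1 : ℝ) ^ t * a (q - m + t) t * (hess a (q - m + (t : ℕ)) (m - t)).det) (m + 1)
  rw [h2] at h3
  have h4 : ∀ s ∈ Finset.range (m + 1),
      (-1 : ℝ) ^ s * (hess a (q - s) s).det * a (q - s) (m - s)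
      = (-1 : ℝ) ^ m * ((-1 : ℝ) ^ (m + 1 - 1 - s) * a (q - m + ((m + 1 - 1 - s : ℕ) : ℤ)) (m + 1 - 1 - s)
          * (hess a (q - (m : ℤ) + ((m + 1 - 1 - s : ℕ) : ℤ)) (m - (m + 1 - 1 - s))).det) := by
    intro s hs
    have hsm : s ≤ m := by
      have := Finset.mem_range.mp hs; omega
    have e1 : m + 1 - 1 - s = m - s := by omega
    have e3 : q - (m : ℤ) + ((m - s : ℕ) : ℤ) = q - s := by
      have : ((m - s : ℕ) : ℤ) = (m : ℤ) - s := by omega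
      rw [this]; ring
    rw [e1, e3]
    have e2 : m - (m - s) = s := by omega
    rw [e2, neg_one_pow_sub m s hsm]
    calc (-1 : ℝ) ^ s * (hess a (q - s) s).det * a (q - s) (m - s)
        = ((-1 : ℝ) ^ m * (-1) ^ m) * ((-1) ^ s * (hess a (q - s) s).det * a (q - s) (m - s)) := by
          rw [neg_one_mul_self_pow, one_mul]
      _ = _ := by ring
  rw [Finset.sum_congr rfl h4, ← Finset.mul_sum, h3, mul_zero]

/-! ### Two-sided solutions of the difference equation with prescribed window values -/

noncomputable def solSeq (a : ℤ → ℕ → ℝ) (k : ℕ) (p : ℤ) (init : ℤ → ℝ) (q : ℤ) : ℝ :=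
  if p ≤ q ∧ q ≤ p + k then init q
  else if q < p then
    (-1 : ℝ) ^ k * (solSeq a k p init (q + k + 1)
      - ∑ j ∈ (Finset.Icc 1 k).attach,
          (-1 : ℝ) ^ ((j : ℕ) - 1) * a (q + k + 1) j * solSeq a k p init (q + k + 1 - (j : ℕ)))
  else
    (∑ j ∈ (Finset.Icc 1 k).attach,
        (-1 : ℝ) ^ ((j : ℕ) - 1) * a q j * solSeq a k p init (q - (j : ℕ)))
      + (-1) ^ k * solSeq a k p init (q - k - 1)
  termination_by ((p - q).toNat + (q - (p + k)).toNat)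
  decreasing_by
  · simp_wf; omega
  · simp_wf
    have hj := Finset.mem_Icc.mp j.2
    omega
  · simp_wf
    have hj := Finset.mem_Icc.mp j.2
    omega
  · simp_wf; omega

lemma solSeq_window (a : ℤ → ℕ → ℝ) (k : ℕ) (p : ℤ) (init : ℤ → ℝ) (r : ℤ)
    (h1 : p ≤ r) (h2 : r ≤ p + k) : solSeq a k p init r = init r := by
  rw [solSeq, if_pos ⟨h1, h2⟩]

lemma solSeq_rec (a : ℤ → ℕ → ℝ) (k : ℕ) (p : ℤ) (init : ℤ → ℝ) (i : ℤ) :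
    solSeq a k p init i
      = (∑ j ∈ Finset.Icc 1 k, (-1) ^ (j - 1) * a i j * solSeq a k p init (i - (j : ℤ)))
        + (-1) ^ k * solSeq a k p init (i - (k : ℤ) - 1) := by
  by_cases hi : p + k < i
  · rw [solSeq]
    rw [if_neg (by omega), if_neg (by omega)]
    congr 1
    rw [← Finset.sum_attach (Finset.Icc 1 k)
      (fun j => (-1 : ℝ) ^ (j - 1) * a i j * solSeq a k p init (i - (j : ℤ)))]
  · have hq : i - (k : ℤ) - 1 < p := by omega
    have hstep : solSeq a k p init (i - (k : ℤ) - 1)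
        = (-1 : ℝ) ^ k * (solSeq a k p init i
          - ∑ j ∈ (Finset.Icc 1 k).attach,
              (-1 : ℝ) ^ ((j : ℕ) - 1) * a i j * solSeq a k p init (i - (j : ℕ))) := by
      rw [solSeq, if_neg (by omega), if_pos hq]
      have e : i - (k : ℤ) - 1 + k + 1 = i := by ring
      rw [e]
    rw [hstep]
    rw [← Finset.sum_attach (Finset.Icc 1 k)
      (fun j => (-1 : ℝ) ^ (j - 1) * a i j * solSeq a k p init (i - (j : ℤ)))]
    set S := ∑ j ∈ (Finset.Icc 1 k).attach,
        (-1 : ℝ) ^ ((j : ℕ) - 1) * a i j * solSeq a k p init (i - (j : ℕ))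
    calc solSeq a k p init i
        = S + ((-1 : ℝ) ^ k * (-1) ^ k) * (solSeq a k p init i - S) := by
          rw [neg_one_mul_self_pow]; ring
      _ = S + (-1) ^ k * ((-1 : ℝ) ^ k * (solSeq a k p init i - S)) := by ring

/-! ### Convolution of coefficient families -/

lemma conv_swap (A B : ℕ) (F : ℕ → ℝ) (G : ℤ → ℕ → ℝ) (V : ℤ → ℝ) (q : ℤ) :
    ∑ s ∈ Finset.range (A + 1), F s * ∑ j ∈ Finset.range (B + 1), G (q - s) j * V (q - s - j)
    = ∑ m ∈ Finset.range (A + B + 1),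
        (∑ s ∈ Finset.range (A + 1),
          if s ≤ m ∧ m ≤ s + B then F s * G (q - s) (m - s) else 0) * V (q - m) := by
  have hL : ∑ s ∈ Finset.range (A + 1), F s * ∑ j ∈ Finset.range (B + 1), G (q - s) j * V (q - s - j)
      = ∑ p ∈ Finset.range (A + 1) ×ˢ Finset.range (B + 1),
          F p.1 * G (q - p.1) p.2 * V (q - p.1 - p.2) := by
    rw [Finset.sum_product]
    apply Finset.sum_congr rfl; intro s _
    rw [Finset.mul_sum]
    apply Finset.sum_congr rfl; intro j _
    ring
  have hR : ∑ m ∈ Finset.range (A + B + 1),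
        (∑ s ∈ Finset.range (A + 1),
          if s ≤ m ∧ m ≤ s + B then F s * G (q - s) (m - s) else 0) * V (q - m)
      = ∑ p ∈ (Finset.range (A + B + 1) ×ˢ Finset.range (A + 1)).filter
            (fun p => p.2 ≤ p.1 ∧ p.1 ≤ p.2 + B),
          F p.2 * G (q - p.2) (p.1 - p.2) * V (q - p.1) := by
    rw [Finset.sum_filter, Finset.sum_product]
    apply Finset.sum_congr rfl; intro m _
    rw [Finset.sum_mul]
    apply Finset.sum_congr rfl; intro s _
    by_cases h : s ≤ m ∧ m ≤ s + B
    · rw [if_pos h, if_pos h]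
    · rw [if_neg h, if_neg h, zero_mul]
  rw [hL, hR]
  refine Finset.sum_nbij' (fun p : ℕ × ℕ => (p.1 + p.2, p.1))
    (fun p : ℕ × ℕ => (p.2, p.1 - p.2)) ?_ ?_ ?_ ?_ ?_
  · intro p hp
    simp only [Finset.mem_product, Finset.mem_range] at hp
    simp only [Finset.mem_filter, Finset.mem_product, Finset.mem_range]
    omega
  · intro p hp
    simp only [Finset.mem_filter, Finset.mem_product, Finset.mem_range] at hp
    simp only [Finset.mem_product, Finset.mem_range]
    omega
  · intro p hp
    obtain ⟨s, j⟩ := p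
    show ((s : ℕ), s + j - s) = (s, j)
    have e : s + j - s = j := by omega
    rw [e]
  · intro p hp
    obtain ⟨m, s⟩ := p
    simp only [Finset.mem_filter, Finset.mem_product, Finset.mem_range] at hp
    show ((s : ℕ) + (m - s), s) = (m, s)
    have e : s + (m - s) = m := by omega
    rw [e]
  · intro p hp
    simp only [Finset.mem_product, Finset.mem_range] at hp
    have e1 : p.1 + p.2 - p.1 = p.2 := by omega
    have e2 : q - (↑(p.1 + p.2) : ℤ) = q - p.1 - p.2 := by push_cast; ring
    rw [e1, e2]

/-! ### The recurrence in summed form -/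

lemma rec_sum_form (K : ℕ) (g : ℤ → ℕ → ℝ) (hg0 : ∀ i : ℤ, g i 0 = 1) (hgK : ∀ i : ℤ, g i (K + 1) = 1)
    (V : ℤ → ℝ)
    (hV : ∀ i : ℤ, V i = (∑ j ∈ Finset.Icc 1 K, (-1) ^ (j - 1) * g i j * V (i - (j : ℤ)))
      + (-1) ^ K * V (i - (K : ℤ) - 1)) (i : ℤ) :
    ∑ j ∈ Finset.range (K + 2), (-1 : ℝ) ^ j * g i j * V (i - j) = 0 := by
  rw [Finset.sum_range_succ, Finset.sum_range_succ']
  have h0 : (-1 : ℝ) ^ 0 * g i 0 * V (i - (0 : ℕ)) = V i := by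
    rw [pow_zero, hg0]
    norm_num
  have hK : (-1 : ℝ) ^ (K + 1) * g i (K + 1) * V (i - ((K + 1 : ℕ) : ℤ))
      = -((-1) ^ K * V (i - (K : ℤ) - 1)) := by
    rw [hgK, pow_succ]
    have : i - ((K + 1 : ℕ) : ℤ) = i - (K : ℤ) - 1 := by push_cast; ring
    rw [this]; ring
  have hmid : ∑ j ∈ Finset.range K, (-1 : ℝ) ^ (j + 1) * g i (j + 1) * V (i - ((j + 1 : ℕ) : ℤ))
      = -∑ j ∈ Finset.Icc 1 K, (-1) ^ (j - 1) * g i j * V (i - (j : ℤ)) := by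
    rw [← Finset.Ico_add_one_right_eq_Icc, Finset.sum_Ico_eq_sum_range]
    have hKK : K + 1 - 1 = K := by omega
    rw [hKK, ← Finset.sum_neg_distrib]
    apply Finset.sum_congr rfl
    intro j _
    have e1 : 1 + j = j + 1 := by omega
    rw [e1]
    have e2 : j + 1 - 1 = j := by omega
    rw [e2, pow_succ]
    ring
  rw [h0, hK, hmid, hV i]
  ring

/-! ### The convolution coefficients of the factorization identity -/

noncomputable def cm (a : ℤ → ℕ → ℝ) (k w : ℕ) (q : ℤ) (m : ℕ) : ℝ :=
  ∑ s ∈ Finset.range (w + 2),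
    if s ≤ m ∧ m ≤ s + (k + 1) then
      (-1 : ℝ) ^ s * abar a w (q - s) (w + 1 - s) * a (q - s) (m - s) else 0

lemma cm_zero (a : ℤ → ℕ → ℝ) (k w : ℕ) (ha0 : ∀ i : ℤ, a i 0 = 1) (q : ℤ) :
    cm a k w q 0 = 1 := by
  rw [cm, Finset.sum_eq_single 0]
  · rw [if_pos ⟨le_refl 0, by omega⟩]
    have e1 : w + 1 - 0 = w + 1 := rfl
    rw [e1, abar_top]
    simp [ha0]
  · intro s _ hne
    rw [if_neg (by omega)]
  · intro h
    exact absurd (Finset.mem_range.mpr (by omega)) h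

lemma cm_low (a : ℤ → ℕ → ℝ) (k w : ℕ) (ha0 : ∀ i : ℤ, a i 0 = 1)
    (has : ∀ i : ℤ, ∀ s : ℕ, k + 1 < s → a i s = 0)
    (m : ℕ) (hm1 : 1 ≤ m) (hmw : m ≤ w) (q : ℤ) : cm a k w q m = 0 := by
  have hkey := key_det a ha0 m hm1 q
  rw [cm]
  have step1 : ∀ s ∈ Finset.range (w + 2),
      (if s ≤ m ∧ m ≤ s + (k + 1) then
        (-1 : ℝ) ^ s * abar a w (q - s) (w + 1 - s) * a (q - s) (m - s) else 0)
      = (if s ≤ m then (-1 : ℝ) ^ s * abar a w (q - s) (w + 1 - s) * a (q - s) (m - s) else 0) := by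
    intro s _
    by_cases h1 : s ≤ m
    · by_cases h2 : m ≤ s + (k + 1)
      · rw [if_pos ⟨h1, h2⟩, if_pos h1]
      · rw [if_neg (by tauto), if_pos h1, has (q - s) (m - s) (by omega), mul_zero]
    · rw [if_neg (by tauto), if_neg h1]
  rw [Finset.sum_congr rfl step1]
  have hsub : Finset.range (m + 1) ⊆ Finset.range (w + 2) := by
    apply Finset.range_subset_range.mpr; omega
  have hout : ∀ x ∈ Finset.range (w + 2), x ∉ Finset.range (m + 1) →
      (if x ≤ m then (-1 : ℝ) ^ x * abar a w (q - x) (w + 1 - x) * a (q - x) (m - x) else 0) = 0 := by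
    intro x _ hx
    rw [if_neg (by
      intro hc
      exact hx (Finset.mem_range.mpr (by omega)))]
  rw [← Finset.sum_subset hsub hout]
  have step2 : ∀ s ∈ Finset.range (m + 1),
      (if s ≤ m then (-1 : ℝ) ^ s * abar a w (q - s) (w + 1 - s) * a (q - s) (m - s) else 0)
      = (-1 : ℝ) ^ s * (hess a (q - s) s).det * a (q - s) (m - s) := by
    intro s hs
    have hsm : s ≤ m := by
      have := Finset.mem_range.mp hs; omega
    rw [if_pos hsm, abar_eq_hess a w _ s (by omega)]
  rw [Finset.sum_congr rfl step2]
  exact hkey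

lemma cm_top (a : ℤ → ℕ → ℝ) (k w : ℕ) (hak : ∀ i : ℤ, a i (k + 1) = 1) (q : ℤ) :
    cm a k w q (k + w + 2) = -(-1 : ℝ) ^ w := by
  rw [cm, Finset.sum_eq_single (w + 1)]
  · rw [if_pos ⟨by omega, by omega⟩]
    have e1 : w + 1 - (w + 1) = 0 := by omega
    have e2 : k + w + 2 - (w + 1) = k + 1 := by omega
    rw [e1, e2, abar_zero, hak, pow_succ]
    ring
  · intro s hs hne
    have hsr := Finset.mem_range.mp hs
    rw [if_neg (by omega)]
  · intro h
    exact absurd (Finset.mem_range.mpr (by omega)) h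

lemma cm_mid (a : ℤ → ℕ → ℝ) (k w : ℕ)
    (ha0 : ∀ i : ℤ, a i 0 = 1) (hak : ∀ i : ℤ, a i (k + 1) = 1)
    (has : ∀ i : ℤ, ∀ s : ℕ, k + 1 < s → a i s = 0)
    (hsuper : ∀ V : ℤ → ℝ,
      (∀ i : ℤ, V i = (∑ j ∈ Finset.Icc 1 k,
          (-1) ^ (j - 1) * a i j * V (i - (j : ℤ))) + (-1) ^ k * V (i - (k : ℤ) - 1)) →
      ∀ i : ℤ, V (i + ((k : ℤ) + (w : ℤ) + 2)) = (-1) ^ k * V i)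
    (m : ℕ) (hm1 : w + 1 ≤ m) (hm2 : m ≤ k + w + 1) (q : ℤ) : cm a k w q m = 0 := by
  set n : ℕ := k + w + 2 with hn
  set p : ℤ := q - (n : ℕ) + 1 with hp
  set init : ℤ → ℝ := fun r => if r = q - (m : ℕ) then 1 else 0 with hinit
  set V : ℤ → ℝ := solSeq a k p init with hV
  have hVrec : ∀ i : ℤ, V i = (∑ j ∈ Finset.Icc 1 k,
      (-1) ^ (j - 1) * a i j * V (i - (j : ℤ))) + (-1) ^ k * V (i - (k : ℤ) - 1) :=
    solSeq_rec a k p init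
  have hVsum : ∀ i : ℤ, ∑ j ∈ Finset.range (k + 2), (-1 : ℝ) ^ j * a i j * V (i - j) = 0 :=
    rec_sum_form k a ha0 hak V hVrec
  have hconv : (∑ s ∈ Finset.range (w + 1 + 1), abar a w (q - s) (w + 1 - s) *
        ∑ j ∈ Finset.range (k + 1 + 1), (-1 : ℝ) ^ j * a (q - s) j * V (q - s - j))
      = ∑ m' ∈ Finset.range (w + 1 + (k + 1) + 1),
          (∑ s ∈ Finset.range (w + 1 + 1),
            if s ≤ m' ∧ m' ≤ s + (k + 1) then
              abar a w (q - s) (w + 1 - s) * ((-1 : ℝ) ^ (m' - s) * a (q - s) (m' - s)) else 0)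
            * V (q - m') :=
    conv_swap (w + 1) (k + 1) (fun s => abar a w (q - s) (w + 1 - s))
      (fun x j => (-1 : ℝ) ^ j * a x j) V q
  have hL0 : (∑ s ∈ Finset.range (w + 1 + 1), abar a w (q - s) (w + 1 - s) *
        ∑ j ∈ Finset.range (k + 1 + 1), (-1 : ℝ) ^ j * a (q - s) j * V (q - s - j)) = 0 := by
    apply Finset.sum_eq_zero
    intro s _
    rw [hVsum (q - s), mul_zero]
  have hcoef : ∀ m' : ℕ, (∑ s ∈ Finset.range (w + 1 + 1),
      if s ≤ m' ∧ m' ≤ s + (k + 1) then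
        abar a w (q - s) (w + 1 - s) * ((-1 : ℝ) ^ (m' - s) * a (q - s) (m' - s)) else 0)
      = (-1 : ℝ) ^ m' * cm a k w q m' := by
    intro m'
    rw [cm, Finset.mul_sum]
    apply Finset.sum_congr rfl
    intro s _
    by_cases h : s ≤ m' ∧ m' ≤ s + (k + 1)
    · rw [if_pos h, if_pos h, neg_one_pow_sub m' s h.1]
      ring
    · rw [if_neg h, if_neg h, mul_zero]
  have hrange : w + 1 + (k + 1) + 1 = n + 1 := by omega
  have hzero : ∑ m' ∈ Finset.range (n + 1),
      ((-1 : ℝ) ^ m' * cm a k w q m') * V (q - m') = 0 := by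
    calc ∑ m' ∈ Finset.range (n + 1), ((-1 : ℝ) ^ m' * cm a k w q m') * V (q - m')
        = ∑ m' ∈ Finset.range (w + 1 + (k + 1) + 1),
            ((-1 : ℝ) ^ m' * cm a k w q m') * V (q - m') := by rw [hrange]
      _ = ∑ m' ∈ Finset.range (w + 1 + (k + 1) + 1),
            (∑ s ∈ Finset.range (w + 1 + 1),
              if s ≤ m' ∧ m' ≤ s + (k + 1) then
                abar a w (q - s) (w + 1 - s) * ((-1 : ℝ) ^ (m' - s) * a (q - s) (m' - s)) else 0)
              * V (q - m') :=
          Finset.sum_congr rfl (fun m' _ => by rw [← hcoef m'])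
      _ = 0 := by rw [← hconv]; exact hL0
  have hVwin : ∀ x : ℕ, w + 1 ≤ x → x ≤ k + w + 1 →
      V (q - (x : ℕ)) = (if (q - (x : ℤ)) = q - (m : ℕ) then 1 else 0) := by
    intro x h1 h2
    rw [hV, solSeq_window a k p init _ (by rw [hp]; push_cast; omega) (by rw [hp]; push_cast; omega)]
  have hsubset : ({0, m, n} : Finset ℕ) ⊆ Finset.range (n + 1) := by
    intro x hx
    simp only [Finset.mem_insert, Finset.mem_singleton] at hx
    apply Finset.mem_range.mpr
    rcases hx with h | h | h <;> omega
  have key0 : ∀ x ∈ Finset.range (n + 1), x ∉ ({0, m, n} : Finset ℕ) →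
      ((-1 : ℝ) ^ x * cm a k w q x) * V (q - x) = 0 := by
    intro x hx hnot
    simp only [Finset.mem_insert, Finset.mem_singleton] at hnot
    push_neg at hnot
    obtain ⟨hx0, hxm, hxn⟩ := hnot
    have hxr := Finset.mem_range.mp hx
    by_cases hlow : x ≤ w
    · rw [cm_low a k w ha0 has x (by omega) hlow q]
      ring
    · have h1 : w + 1 ≤ x := by omega
      have h2 : x ≤ k + w + 1 := by omega
      rw [hVwin x h1 h2, if_neg (by
        intro hh
        exact hxm (by omega))]
      ring
  have hsum3 : ∑ x ∈ ({0, m, n} : Finset ℕ), ((-1 : ℝ) ^ x * cm a k w q x) * V (q - x) = 0 := by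
    rw [Finset.sum_subset hsubset key0, hzero]
  have h0m : (0 : ℕ) ∉ ({m, n} : Finset ℕ) := by
    simp only [Finset.mem_insert, Finset.mem_singleton]
    omega
  have hmn : m ∉ ({n} : Finset ℕ) := by
    simp only [Finset.mem_singleton]
    omega
  rw [Finset.sum_insert h0m, Finset.sum_insert hmn, Finset.sum_singleton] at hsum3
  have e0 : ((-1 : ℝ) ^ (0 : ℕ) * cm a k w q 0) * V (q - ((0 : ℕ) : ℤ)) = V q := by
    rw [cm_zero a k w ha0]
    norm_num
  have em : ((-1 : ℝ) ^ m * cm a k w q m) * V (q - (m : ℕ)) = (-1 : ℝ) ^ m * cm a k w q m := by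
    rw [hVwin m hm1 hm2, if_pos rfl, mul_one]
  have en : ((-1 : ℝ) ^ n * cm a k w q n) * V (q - (n : ℕ)) = -((-1 : ℝ) ^ k) * V (q - (n : ℕ)) := by
    rw [hn, cm_top a k w hak]
    have hpn : (-1 : ℝ) ^ (k + w + 2) = (-1) ^ k * (-1) ^ w := by
      rw [pow_add, pow_add]; norm_num
    rw [hpn]
    have : ((-1 : ℝ) ^ k * (-1) ^ w) * (-(-1 : ℝ) ^ w) = -((-1 : ℝ) ^ k) := by
      have h := neg_one_mul_self_pow w
      calc ((-1 : ℝ) ^ k * (-1) ^ w) * (-(-1 : ℝ) ^ w)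
          = -((-1 : ℝ) ^ k * ((-1) ^ w * (-1) ^ w)) := by ring
        _ = -((-1 : ℝ) ^ k) := by rw [h, mul_one]
    rw [this]
  rw [e0, em, en] at hsum3
  have hsup := hsuper V hVrec (q - ((k : ℤ) + (w : ℤ) + 2))
  have hqq : q - ((k : ℤ) + (w : ℤ) + 2) + ((k : ℤ) + (w : ℤ) + 2) = q := by ring
  rw [hqq] at hsup
  have hcast : q - ((n : ℕ) : ℤ) = q - ((k : ℤ) + (w : ℤ) + 2) := by
    rw [hn]; push_cast; ring
  rw [hcast] at hsum3
  rw [hsup] at hsum3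
  have hfin : (-1 : ℝ) ^ m * cm a k w q m = 0 := by linarith
  have hpow : ((-1 : ℝ) ^ m) ≠ 0 := pow_ne_zero m (by norm_num)
  exact (mul_eq_zero.mp hfin).resolve_left hpow

/-! ### Main theorem -/

/-- **The combinatorial Gale transform preserves superperiodicity.**
Let `n = k + w + 2` and let the order-`(k+1)` difference equation with coefficients
`a i j` (extended by `a i 0 = 1`, `a i (k+1) = 1`, `a i s = 0` for `s > k+1`) be
`n`-superperiodic.  Then its Gale dual equation of order `w+1`, with coefficients
`galeCoeff a w i s`, is also `n`-superperiodic: the coefficients are `n`-periodic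
and every solution `W` satisfies `W (i+n) = (-1)^w * W i`. -/
theorem gale_dual_equation_superperiodic (k w : ℕ) (hk : 1 ≤ k) (hw : 1 ≤ w)
    (a : ℤ → ℕ → ℝ)
    (ha0 : ∀ i : ℤ, a i 0 = 1)
    (hak : ∀ i : ℤ, a i (k + 1) = 1)
    (has : ∀ i : ℤ, ∀ s : ℕ, k + 1 < s → a i s = 0)
    (hper : ∀ i : ℤ, ∀ j : ℕ, 1 ≤ j → j ≤ k →
      a (i + ((k : ℤ) + (w : ℤ) + 2)) j = a i j)
    (hsuper : ∀ V : ℤ → ℝ,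
      (∀ i : ℤ, V i = (∑ j ∈ Finset.Icc 1 k,
          (-1) ^ (j - 1) * a i j * V (i - (j : ℤ))) + (-1) ^ k * V (i - (k : ℤ) - 1)) →
      ∀ i : ℤ, V (i + ((k : ℤ) + (w : ℤ) + 2)) = (-1) ^ k * V i) :
    (∀ i : ℤ, ∀ s : ℕ, 1 ≤ s → s ≤ w →
      galeCoeff a w (i + ((k : ℤ) + (w : ℤ) + 2)) s = galeCoeff a w i s) ∧
    (∀ W : ℤ → ℝ,
      (∀ i : ℤ, W i = (∑ s ∈ Finset.Icc 1 w,
          (-1) ^ (s - 1) * galeCoeff a w i s * W (i - (s : ℤ))) +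
            (-1) ^ w * W (i - (w : ℤ) - 1)) →
      ∀ i : ℤ, W (i + ((k : ℤ) + (w : ℤ) + 2)) = (-1) ^ w * W i) := by
  constructor
  · -- periodicity of the Gale coefficients
    intro i s hs1 hsw
    rw [galeCoeff_eq_hess, galeCoeff_eq_hess]
    congr 1
    ext r c
    rw [hess_apply, hess_apply, hessEnt, hessEnt]
    by_cases hcr : (c : ℕ) ≤ (r : ℕ)
    · rw [if_pos hcr, if_pos hcr]
      set e : ℕ := (r : ℕ) - (c : ℕ) + 1 with he
      have he1 : 1 ≤ e := by omega
      have heW : e ≤ w := by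
        have hr := r.isLt
        omega
      have harg : i + ((k : ℤ) + (w : ℤ) + 2) + (r : ℕ) + 1
          = (i + (r : ℕ) + 1) + ((k : ℤ) + (w : ℤ) + 2) := by ring
      rw [harg]
      rcases lt_or_ge e (k + 1) with h | h
      · exact hper _ e he1 (by omega)
      · rcases eq_or_lt_of_le h with h' | h'
        · rw [← h', hak, hak]
        · rw [has _ e h', has _ e h']
    · rw [if_neg hcr, if_neg hcr]
  · -- superperiodicity of the dual equation
    intro W hWrec
    set n : ℕ := k + w + 2 with hn
    have hWrec' : ∀ i : ℤ, W i = (∑ s ∈ Finset.Icc 1 w,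
        (-1) ^ (s - 1) * abar a w i s * W (i - (s : ℤ))) + (-1) ^ w * W (i - (w : ℤ) - 1) := by
      intro i'
      rw [hWrec i']
      congr 1
      apply Finset.sum_congr rfl
      intro s hs
      obtain ⟨h1, h2⟩ := Finset.mem_Icc.mp hs
      rw [abar_gale a w _ s h1 h2]
    have hWsum : ∀ i : ℤ, ∑ s ∈ Finset.range (w + 2),
        (-1 : ℝ) ^ s * abar a w i s * W (i - s) = 0 :=
      rec_sum_form w (abar a w) (abar_zero a w) (abar_top a w) W hWrec'
    -- main quasiperiodicity relation
    have hmain : ∀ i : ℤ, W i = (-1 : ℝ) ^ w * W (i - (n : ℕ)) := by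
      intro i
      have hconv : (∑ j ∈ Finset.range (k + 1 + 1), a (i - j) (k + 1 - j) *
            ∑ s ∈ Finset.range (w + 1 + 1), (-1 : ℝ) ^ s * abar a w (i - j) s * W (i - j - s))
          = ∑ m ∈ Finset.range (k + 1 + (w + 1) + 1),
              (∑ j ∈ Finset.range (k + 1 + 1),
                if j ≤ m ∧ m ≤ j + (w + 1) then
                  a (i - j) (k + 1 - j) * ((-1 : ℝ) ^ (m - j) * abar a w (i - j) (m - j)) else 0)
                * W (i - m) :=
        conv_swap (k + 1) (w + 1) (fun j => a (i - j) (k + 1 - j))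
          (fun x s => (-1 : ℝ) ^ s * abar a w x s) W i
      have hL0 : (∑ j ∈ Finset.range (k + 1 + 1), a (i - j) (k + 1 - j) *
            ∑ s ∈ Finset.range (w + 1 + 1), (-1 : ℝ) ^ s * abar a w (i - j) s * W (i - j - s)) = 0 := by
        apply Finset.sum_eq_zero
        intro j _
        rw [hWsum (i - j), mul_zero]
      have hEm : ∀ m : ℕ, m ≤ n →
          (∑ j ∈ Finset.range (k + 1 + 1),
            if j ≤ m ∧ m ≤ j + (w + 1) then
              a (i - j) (k + 1 - j) * ((-1 : ℝ) ^ (m - j) * abar a w (i - j) (m - j)) else 0)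
          = (-1 : ℝ) ^ (w + 1) * cm a k w (i - (m : ℕ) + ((w + 1 : ℕ) : ℤ)) (n - m) := by
        intro m hmn
        rw [cm, Finset.mul_sum]
        simp only [mul_ite, mul_zero]
        rw [← Finset.sum_filter, ← Finset.sum_filter]
        refine Finset.sum_nbij' (fun j => j + (w + 1) - m) (fun s => s + m - (w + 1)) ?_ ?_ ?_ ?_ ?_
        · intro j hj
          simp only [Finset.mem_filter, Finset.mem_range] at hj ⊢
          omega
        · intro s hs
          simp only [Finset.mem_filter, Finset.mem_range] at hs ⊢
          omega
        · intro j hj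
          simp only [Finset.mem_filter, Finset.mem_range] at hj
          show j + (w + 1) - m + m - (w + 1) = j
          omega
        · intro s hs
          simp only [Finset.mem_filter, Finset.mem_range] at hs
          show s + m - (w + 1) + (w + 1) - m = s
          omega
        · intro j hj
          simp only [Finset.mem_filter, Finset.mem_range] at hj
          obtain ⟨hjr, hjm, hmj⟩ := hj
          have hs1 : j + (w + 1) - m ≤ w + 1 := by omega
          have e1 : i - (m : ℕ) + ((w + 1 : ℕ) : ℤ) - ((j + (w + 1) - m : ℕ) : ℤ) = i - (j : ℕ) := by
            have : ((j + (w + 1) - m : ℕ) : ℤ) = (j : ℤ) + (w + 1) - m := by omega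
            rw [this]
            push_cast
            ring
          have e2 : w + 1 - (j + (w + 1) - m) = m - j := by omega
          have e3 : n - m - (j + (w + 1) - m) = k + 1 - j := by omega
          have e4 : m - j = (w + 1) - (j + (w + 1) - m) := by omega
          rw [e1, e2, e3, e4, neg_one_pow_sub (w + 1) (j + (w + 1) - m) hs1]
          ring
      have hzero : ∑ m ∈ Finset.range (n + 1),
          ((-1 : ℝ) ^ (w + 1) * cm a k w (i - (m : ℕ) + ((w + 1 : ℕ) : ℤ)) (n - m)) * W (i - m) = 0 := by
        have hrange : k + 1 + (w + 1) + 1 = n + 1 := by omega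
        calc ∑ m ∈ Finset.range (n + 1),
              ((-1 : ℝ) ^ (w + 1) * cm a k w (i - (m : ℕ) + ((w + 1 : ℕ) : ℤ)) (n - m)) * W (i - m)
            = ∑ m ∈ Finset.range (k + 1 + (w + 1) + 1),
              ((-1 : ℝ) ^ (w + 1) * cm a k w (i - (m : ℕ) + ((w + 1 : ℕ) : ℤ)) (n - m)) * W (i - m) := by
              rw [hrange]
          _ = ∑ m ∈ Finset.range (k + 1 + (w + 1) + 1),
              (∑ j ∈ Finset.range (k + 1 + 1),
                if j ≤ m ∧ m ≤ j + (w + 1) then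
                  a (i - j) (k + 1 - j) * ((-1 : ℝ) ^ (m - j) * abar a w (i - j) (m - j)) else 0)
                * W (i - m) := by
              apply Finset.sum_congr rfl
              intro m hm
              rw [hEm m (by have := Finset.mem_range.mp hm; omega)]
          _ = 0 := by rw [← hconv]; exact hL0
      have hsubset : ({0, n} : Finset ℕ) ⊆ Finset.range (n + 1) := by
        intro x hx
        simp only [Finset.mem_insert, Finset.mem_singleton] at hx
        apply Finset.mem_range.mpr
        rcases hx with h | h <;> omega
      have key0 : ∀ m ∈ Finset.range (n + 1), m ∉ ({0, n} : Finset ℕ) →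
          ((-1 : ℝ) ^ (w + 1) * cm a k w (i - (m : ℕ) + ((w + 1 : ℕ) : ℤ)) (n - m)) * W (i - m) = 0 := by
        intro m hm hnot
        simp only [Finset.mem_insert, Finset.mem_singleton] at hnot
        push_neg at hnot
        obtain ⟨hm0, hmn⟩ := hnot
        have hmr := Finset.mem_range.mp hm
        set M : ℕ := n - m with hM
        have hM1 : 1 ≤ M := by omega
        have hMn : M ≤ k + w + 1 := by omega
        by_cases hlow : M ≤ w
        · rw [cm_low a k w ha0 has M hM1 hlow]
          ring
        · rw [cm_mid a k w ha0 hak has hsuper M (by omega) hMn]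
          ring
      have hsum2 : ∑ x ∈ ({0, n} : Finset ℕ),
          ((-1 : ℝ) ^ (w + 1) * cm a k w (i - (x : ℕ) + ((w + 1 : ℕ) : ℤ)) (n - x)) * W (i - x) = 0 := by
        rw [Finset.sum_subset hsubset key0, hzero]
      have h0n : (0 : ℕ) ∉ ({n} : Finset ℕ) := by
        simp only [Finset.mem_singleton]
        omega
      rw [Finset.sum_insert h0n, Finset.sum_singleton] at hsum2
      have e0 : ((-1 : ℝ) ^ (w + 1) * cm a k w (i - ((0 : ℕ) : ℤ) + ((w + 1 : ℕ) : ℤ)) (n - 0))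
          * W (i - ((0 : ℕ) : ℤ)) = W i := by
        have hnn : n - 0 = k + w + 2 := by omega
        rw [hnn, cm_top a k w hak]
        have : (-1 : ℝ) ^ (w + 1) * -(-1 : ℝ) ^ w = 1 := by
          rw [pow_succ]
          have := neg_one_mul_self_pow w
          calc (-1 : ℝ) ^ w * (-1) * -(-1 : ℝ) ^ w = (-1 : ℝ) ^ w * (-1 : ℝ) ^ w := by ring
            _ = 1 := this
        rw [this]
        norm_num
      have en : ((-1 : ℝ) ^ (w + 1) * cm a k w (i - ((n : ℕ) : ℤ) + ((w + 1 : ℕ) : ℤ)) (n - n))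
          * W (i - ((n : ℕ) : ℤ)) = (-1 : ℝ) ^ (w + 1) * W (i - ((n : ℕ) : ℤ)) := by
        have hnn : n - n = 0 := by omega
        rw [hnn, cm_zero a k w ha0, mul_one]
      rw [e0, en] at hsum2
      have : W i = -((-1 : ℝ) ^ (w + 1)) * W (i - ((n : ℕ) : ℤ)) := by linarith
      rw [this, pow_succ]
      ring
    intro i
    have := hmain (i + ((k : ℤ) + (w : ℤ) + 2))
    have harg : i + ((k : ℤ) + (w : ℤ) + 2) - ((n : ℕ) : ℤ) = i := by
      rw [hn]; push_cast; ring
    rw [harg] at this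
    exact this
end
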